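/- Fix n ≥ 1 and rates λ_1, ..., λ_n > 0 and λ_obs > 0, and define for each K ⊆ {1,...,n}: P_Null(∅) = λ_obs / (λ_obs + Σ_i λ_i) and, for nonempty K, P_Null(K) = Σ_{(i_1,...,i_{|K|}) ∈ S_K} [λ_obs / (λ_obs + Σ_{i ∉ K} λ_i)] · Π_{j=1}^{|K|} [λ_{i_j} / (Σ_{l=j}^{|K|} λ_{i_l} + λ_obs + Σ_{i ∉ K} λ_i)], where S_K is the set of all permutations of K. Then Σ_{K ⊆ {1,...,n}} P_Null(K) = 1. -/

import Mathlib

open MeasureTheory ProbabilityTheory Finset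

/-- For a list of indices `(i_1, …, i_m)` (an ordering of the altered genes) and constant
`C = λ_obs + ∑_{i ∉ K} λ_i`, the product `∏_{j=1}^m λ_{i_j} / (∑_{l=j}^m λ_{i_l} + C)`. -/
noncomputable def ordProd {n : ℕ} (lam : Fin n → ℝ) (C : ℝ) : List (Fin n) → ℝ
  | [] => 1
  | i :: rest => lam i / (((i :: rest).map lam).sum + C) * ordProd lam C rest

/-- The TiMEx null-model probability of the genotype `g_K`:
`P(g_K | θ_Null) = ∑_{(i_1,…,i_|K|) ∈ S_K} [λ_obs / (λ_obs + ∑_{i ∉ K} λ_i)] ·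
∏_{j=1}^{|K|} λ_{i_j} / (∑_{l=j}^{|K|} λ_{i_l} + λ_obs + ∑_{i ∉ K} λ_i)`,
where `S_K` is the set of permutations of `K` (for `K = ∅` this is
`λ_obs / (λ_obs + ∑_i λ_i)`). -/
noncomputable def nullProb {n : ℕ} (lam : Fin n → ℝ) (lobs : ℝ) (K : Finset (Fin n)) : ℝ :=
  (((K.sort (· ≤ ·)).permutations).map
    (fun l => (lobs / (lobs + ∑ i ∈ Kᶜ, lam i)) *
      ordProd lam (lobs + ∑ i ∈ Kᶜ, lam i) l)).sum

/-- Sum of `ordProd` over all permutations of a list. -/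
noncomputable def permSum {n : ℕ} (lam : Fin n → ℝ) (C : ℝ) (l : List (Fin n)) : ℝ :=
  (l.permutations.map (ordProd lam C)).sum

lemma permSum_congr {n : ℕ} (lam : Fin n → ℝ) (C : ℝ) {l l' : List (Fin n)}
    (h : l.Perm l') : permSum lam C l = permSum lam C l' :=
  ((h.permutations).map (ordProd lam C)).sum_eq

lemma permSum_nil {n : ℕ} (lam : Fin n → ℝ) (C : ℝ) :
    permSum lam C List.nil = 1 := by
  simp [permSum, ordProd]

lemma sum_flatMap' {α : Type*} (l : List α) (f : α → List ℝ) :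
    (l.flatMap f).sum = (l.map (fun a => (f a).sum)).sum := by
  induction l with
  | nil => simp
  | cons a t ih => simp [List.flatMap_cons, ih]

lemma permutations_perm_flatMap {α : Type*} [DecidableEq α] (l : List α)
    (hl : l.Nodup) (hne : l ≠ []) :
    l.permutations.Perm (l.flatMap (fun i => (l.erase i).permutations.map (i :: ·))) := by
  apply (List.perm_ext_iff_of_nodup (List.nodup_permutations l hl) ?_).2
  · intro a
    rw [List.mem_permutations, List.mem_flatMap]
    constructor
    · intro h
      cases a with
      | nil => exact absurd h.nil_eq.symm hne
      | cons i p =>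
        have hi : i ∈ l := h.subset (List.mem_cons_self)
        refine ⟨i, hi, ?_⟩
        rw [List.mem_map]
        refine ⟨p, ?_, rfl⟩
        rw [List.mem_permutations]
        exact (h.trans (List.perm_cons_erase hi)).cons_inv
    · rintro ⟨i, hi, ha⟩
      rw [List.mem_map] at ha
      obtain ⟨p, hp, rfl⟩ := ha
      rw [List.mem_permutations] at hp
      exact (hp.cons i).trans (List.perm_cons_erase hi).symm
  · rw [List.nodup_flatMap]
    constructor
    · intro i _
      exact (List.nodup_permutations _ (hl.erase i)).map (fun _ _ h => by
        injection h)
    · refine List.Pairwise.imp ?_ hl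
      intro a b hab x hx hx'
      simp only [Function.onFun, List.mem_map] at hx hx'
      obtain ⟨p, _, rfl⟩ := hx
      obtain ⟨q, _, h2⟩ := hx'
      exact hab ((List.cons.injEq _ _ _ _).mp h2).1.symm

lemma permSum_rec {n : ℕ} (lam : Fin n → ℝ) (C : ℝ) (l : List (Fin n))
    (hl : l.Nodup) (hne : l ≠ []) :
    permSum lam C l =
      (l.map (fun i => lam i / ((l.map lam).sum + C) * permSum lam C (l.erase i))).sum := by
  unfold permSum
  rw [((permutations_perm_flatMap l hl hne).map (ordProd lam C)).sum_eq]
  rw [List.map_flatMap, sum_flatMap']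
  congr 1
  apply List.map_congr_left
  intro i hi
  rw [List.map_map]
  have hcg : ∀ p ∈ (l.erase i).permutations,
      (ordProd lam C ∘ (i :: ·)) p = lam i / ((l.map lam).sum + C) * ordProd lam C p := by
    intro p hp
    rw [List.mem_permutations] at hp
    have hperm : (i :: p).Perm l := (hp.cons i).trans (List.perm_cons_erase hi).symm
    simp only [Function.comp_apply, ordProd]
    rw [(hperm.map lam).sum_eq]
  rw [List.map_congr_left hcg, List.sum_map_mul_left]

lemma sum_sort_map {n : ℕ} (K : Finset (Fin n)) (f : Fin n → ℝ) :
    ((K.sort (· ≤ ·)).map f).sum = ∑ i ∈ K, f i := by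
  rw [((Finset.sort_perm_toList (s := K) (r := (· ≤ ·))).map f).sum_eq, Finset.sum_map_toList]

lemma sort_erase_perm {n : ℕ} (K : Finset (Fin n)) (i : Fin n) :
    ((K.sort (· ≤ ·)).erase i).Perm ((K.erase i).sort (· ≤ ·)) := by
  apply (List.perm_ext_iff_of_nodup ((Finset.sort_nodup (s := K) (r := (· ≤ ·))).erase i)
    (Finset.sort_nodup (s := K.erase i) (r := (· ≤ ·)))).2
  intro a
  rw [(Finset.sort_nodup (s := K) (r := (· ≤ ·))).mem_erase_iff, Finset.mem_sort, Finset.mem_sort,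
    Finset.mem_erase]

lemma sdiff_insert_eq {n : ℕ} (U K : Finset (Fin n)) (i : Fin n) (hi : i ∈ K) :
    U \ K = (U.erase i) \ (K.erase i) := by
  ext a
  simp only [Finset.mem_sdiff, Finset.mem_erase]
  constructor
  · rintro ⟨haU, haK⟩
    exact ⟨⟨fun h => haK (h ▸ hi), haU⟩, fun h => haK h.2⟩
  · rintro ⟨⟨hne, haU⟩, h⟩
    exact ⟨haU, fun hK => h ⟨hne, hK⟩⟩

lemma main_lemma {n : ℕ} (lam : Fin n → ℝ) (lobs : ℝ)
    (hlam : ∀ i, 0 < lam i) (hlobs : 0 < lobs) (U : Finset (Fin n)) :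
    ∑ K ∈ U.powerset, (lobs / (lobs + ∑ i ∈ U \ K, lam i)) *
      permSum lam (lobs + ∑ i ∈ U \ K, lam i) (K.sort (· ≤ ·)) = 1 := by
  induction U using Finset.strongInduction with
  | _ U ih =>
  have hTpos : 0 < lobs + ∑ i ∈ U, lam i := by
    have : 0 ≤ ∑ i ∈ U, lam i := Finset.sum_nonneg fun i _ => (hlam i).le
    linarith
  set T : ℝ := lobs + ∑ i ∈ U, lam i with hT
  have hmem : (∅ : Finset (Fin n)) ∈ U.powerset := Finset.empty_mem_powerset U
  rw [← Finset.add_sum_erase _ _ hmem]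
  have hempty : (lobs / (lobs + ∑ i ∈ U \ ∅, lam i)) *
      permSum lam (lobs + ∑ i ∈ U \ ∅, lam i) ((∅ : Finset (Fin n)).sort (· ≤ ·))
      = lobs / T := by
    rw [Finset.sdiff_empty, Finset.sort_empty, permSum_nil, mul_one]
  rw [hempty]
  -- rewrite each nonempty term via the recursion
  have hstep : ∀ K ∈ U.powerset.erase ∅,
      (lobs / (lobs + ∑ i ∈ U \ K, lam i)) *
        permSum lam (lobs + ∑ i ∈ U \ K, lam i) (K.sort (· ≤ ·))
      = ∑ i ∈ K, (lobs / (lobs + ∑ j ∈ U \ K, lam j)) * (lam i / T) *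
          permSum lam (lobs + ∑ j ∈ U \ K, lam j) ((K.erase i).sort (· ≤ ·)) := by
    intro K hK
    rw [Finset.mem_erase, Finset.mem_powerset] at hK
    obtain ⟨hKne, hKU⟩ := hK
    set C : ℝ := lobs + ∑ i ∈ U \ K, lam i with hC
    have hsum : ((K.sort (· ≤ ·)).map lam).sum + C = T := by
      rw [sum_sort_map, hC, hT,
        show (∑ i ∈ K, lam i) + (lobs + ∑ i ∈ U \ K, lam i)
          = lobs + ((∑ i ∈ U \ K, lam i) + ∑ i ∈ K, lam i) by ring,
        Finset.sum_sdiff hKU]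
    have hnil : K.sort (· ≤ ·) ≠ [] := by
      intro h
      apply hKne
      have := Finset.sort_nodup (s := K) (r := (· ≤ ·))
      have hcard : K.card = 0 := by
        rw [← Finset.length_sort (· ≤ ·), h, List.length_nil]
      exact Finset.card_eq_zero.mp hcard
    rw [permSum_rec lam C _ (Finset.sort_nodup _ _) hnil, hsum]
    rw [show (fun i => lam i / T * permSum lam C ((K.sort (· ≤ ·)).erase i))
      = (fun i => lam i / T * permSum lam C ((K.erase i).sort (· ≤ ·))) from
      funext fun i => by rw [permSum_congr lam C (sort_erase_perm K i)]]
    rw [sum_sort_map, Finset.mul_sum]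
    exact Finset.sum_congr rfl fun i _ => by ring
  rw [Finset.sum_congr rfl hstep]
  -- extend the sum back to the full powerset (the ∅ term vanishes)
  rw [Finset.sum_erase _ (by simp)]
  -- swap the order of summation
  have hext : ∀ K ∈ U.powerset,
      (∑ i ∈ K, (lobs / (lobs + ∑ j ∈ U \ K, lam j)) * (lam i / T) *
        permSum lam (lobs + ∑ j ∈ U \ K, lam j) ((K.erase i).sort (· ≤ ·)))
      = ∑ i ∈ U, if i ∈ K then (lobs / (lobs + ∑ j ∈ U \ K, lam j)) * (lam i / T) *
        permSum lam (lobs + ∑ j ∈ U \ K, lam j) ((K.erase i).sort (· ≤ ·)) else 0 := by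
    intro K hK
    rw [Finset.mem_powerset] at hK
    rw [Finset.sum_ite_mem, Finset.inter_eq_right.mpr hK]
  rw [Finset.sum_congr rfl hext, Finset.sum_comm]
  have hinner : ∀ i ∈ U,
      (∑ K ∈ U.powerset, if i ∈ K then (lobs / (lobs + ∑ j ∈ U \ K, lam j)) * (lam i / T) *
        permSum lam (lobs + ∑ j ∈ U \ K, lam j) ((K.erase i).sort (· ≤ ·)) else 0)
      = lam i / T := by
    intro i hi
    rw [← Finset.sum_filter]
    have hbij : ∑ K ∈ U.powerset.filter (fun K => i ∈ K),
        (lobs / (lobs + ∑ j ∈ U \ K, lam j)) * (lam i / T) *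
          permSum lam (lobs + ∑ j ∈ U \ K, lam j) ((K.erase i).sort (· ≤ ·))
        = ∑ K' ∈ (U.erase i).powerset, (lam i / T) *
          ((lobs / (lobs + ∑ j ∈ (U.erase i) \ K', lam j)) *
            permSum lam (lobs + ∑ j ∈ (U.erase i) \ K', lam j) (K'.sort (· ≤ ·))) := by
      apply Finset.sum_nbij' (fun K => K.erase i) (fun K' => insert i K')
      · intro K hK
        rw [Finset.mem_filter, Finset.mem_powerset] at hK
        rw [Finset.mem_powerset]
        exact Finset.erase_subset_erase i hK.1
      · intro K' hK'
        rw [Finset.mem_powerset] at hK'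
        rw [Finset.mem_filter, Finset.mem_powerset]
        constructor
        · intro a ha
          rcases Finset.mem_insert.mp ha with rfl | h
          · exact hi
          · exact (Finset.erase_subset i U) (hK' h)
        · exact Finset.mem_insert_self i K'
      · intro K hK
        rw [Finset.mem_filter] at hK
        exact Finset.insert_erase hK.2
      · intro K' hK'
        rw [Finset.mem_powerset] at hK'
        have : i ∉ K' := fun h => (Finset.mem_erase.mp (hK' h)).1 rfl
        exact Finset.erase_insert this
      · intro K hK
        rw [Finset.mem_filter] at hK
        rw [← sdiff_insert_eq U K i hK.2]
        ring
    rw [hbij, ← Finset.mul_sum, ih (U.erase i) (Finset.erase_ssubset hi), mul_one]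
  rw [Finset.sum_congr rfl hinner, ← Finset.sum_div, ← add_div, ← hT,
    div_self (ne_of_gt hTpos)]

/-- the TiMEx null-model genotype probabilities form a probability
distribution on the subsets `K ⊆ {1,…,n}`. -/
theorem timex_null_model_sums_to_one
    (n : ℕ) (hn : 1 ≤ n) (lam : Fin n → ℝ) (lobs : ℝ)
    (hlam : ∀ i, 0 < lam i) (hlobs : 0 < lobs) :
    ∑ K : Finset (Fin n), nullProb lam lobs K = 1 := by
  have h := main_lemma lam lobs hlam hlobs Finset.univ
  rw [Finset.powerset_univ] at h
  rw [← h]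
  apply Finset.sum_congr rfl
  intro K _
  unfold nullProb permSum
  rw [show (Finset.univ : Finset (Fin n)) \ K = Kᶜ from (Finset.compl_eq_univ_sdiff K).symm]
  rw [← List.sum_map_mul_left]
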